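/- If R21 = (R2/R1)·(β1+σ1)/(γ1+σ1) > 1, then the quantity R* = N(β2 γ1(β1+σ1) − β1 γ2(γ1+σ1))/(β1 β2((1−ε)σ1 + γ1)) is strictly positive, and setting I2 = 0 and R2 = R* solves the I2-nullcline equation β2 − γ2 − (β2/N)(ω(0,R2) + R2) = 0, where ω(0,R2) = σ1(N(β1−γ1) − εβ1 R2)/(β1(γ1+σ1)). -/

import Mathlib

theorem I2_nullcline_R2_intercept
    (N β1 β2 γ1 γ2 σ1 ε : ℝ)
    (hN : 0 < N) (hβ1 : 0 < β1) (hβ2 : 0 < β2) (hγ1 : 0 < γ1) (hγ2 : 0 < γ2)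
    (hσ1 : 0 < σ1) (hβ1γ1 : β1 > γ1) (hε0 : 0 ≤ ε) (hε1 : ε ≤ 1)
    (Rstar : ℝ)
    (hRstar : Rstar = N * (β2 * γ1 * (β1 + σ1) - β1 * γ2 * (γ1 + σ1)) /
        (β1 * β2 * ((1 - ε) * σ1 + γ1)))
    (hreg : 0 + ε * Rstar < N * (1 - 1 / (β1 / γ1)))
    (hR21 : 1 < ((β2 / γ2) / (β1 / γ1)) * ((β1 + σ1) / (γ1 + σ1))) :
    0 < Rstar ∧
    β2 - γ2 - (β2 / N) *
      (σ1 * (N * (β1 - γ1) - ε * β1 * Rstar) / (β1 * (γ1 + σ1)) + Rstar) = 0 := by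
  have hγσ : 0 < γ1 + σ1 := by linarith
  have hden : 0 < β1 * β2 * ((1 - ε) * σ1 + γ1) := by
    apply mul_pos (mul_pos hβ1 hβ2)
    nlinarith
  have hnum : 0 < β2 * γ1 * (β1 + σ1) - β1 * γ2 * (γ1 + σ1) := by
    rw [div_div_div_comm, div_mul_div_comm, lt_div_iff₀ (by positivity), one_mul,
      div_mul_eq_mul_div, div_mul_eq_mul_div, div_lt_div_iff₀ hγ1 hβ1] at hR21
    nlinarith
  constructor
  · rw [hRstar]; positivity
  · rw [hRstar]
    have hd1 : (1 - ε) * σ1 + γ1 ≠ 0 := (by nlinarith : 0 < (1 - ε) * σ1 + γ1).ne'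
    have hd2 : σ1 * (1 - ε) + γ1 ≠ 0 := (by nlinarith : 0 < σ1 * (1 - ε) + γ1).ne'
    field_simp
    ring
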